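/- Let (Q, ρ, σ, τ) be a string algebra datum with sign maps and let v ∈ Q₀. Then the left hammock linear order (H_l(v), <_l) is order-isomorphic to the linguage 𝐋(M) of some deterministic finite automaton M over {0,1}. -/

import Mathlib

/-- A deterministic finite automaton with a partial transition function. -/
structure PDFA (σ : Type) where
  /-- the (finite) set of states -/
  State : Type
  finState : Finite State
  /-- the start state -/
  start : State
  /-- the set of accept states -/
  accept : Set State
  /-- the partial transition function -/
  step : State → σ → Option State

namespace PDFA

variable {σ : Type} (M : PDFA σ)

/-- The extended (partial) transition function `δ̂`, reading the word left to right. -/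
def run (q : M.State) (w : List σ) : Option M.State :=
  w.foldlM (fun q a => M.step q a) q

/-- The language accepted by the automaton. -/
def lang : Set (List σ) := {w | ∃ q ∈ M.accept, M.run M.start w = some q}

end PDFA

/-- The inorder relation `<₂` on finite binary words: `x <₂ y` iff, writing
`x = w·x'`, `y = w·y'` with `w` the longest common prefix, either `x'` begins
with `0`(=`false`) or `y'` begins with `1`(=`true`). -/
def inlt : List Bool → List Bool → Prop
  | [], [] => False
  | [], b :: _ => b = true
  | a :: _, [] => a = false
  | a :: x, b :: y => (a = false ∧ b = true) ∨ (a = b ∧ inlt x y)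

/-- A string algebra datum: a finite quiver together with a finite nonempty set `ρ`
of blocking paths of length at least 2, satisfying the string algebra conditions. -/
structure StringAlgData where
  /-- the vertices -/
  V : Type
  /-- the arrows -/
  A : Type
  finV : Finite V
  finA : Finite A
  src : A → V
  tgt : A → V
  /-- the blocking relations: a finite set of paths, recorded as lists of arrows
  `[α₁, …, αₙ]` (read right to left, i.e. `s αᵢ = t αᵢ₊₁`) -/
  ρ : Finset (List A)
  ρ_ne : ρ.Nonempty
  ρ_len : ∀ p ∈ ρ, 2 ≤ p.length
  ρ_path : ∀ p ∈ ρ, p.Chain' (fun a b => src a = tgt b)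
  /-- at most two arrows out of any vertex -/
  two_out : ∀ (v : V) (a b c : A), src a = v → src b = v → src c = v → a = b ∨ a = c ∨ b = c
  /-- at most two arrows into any vertex -/
  two_in : ∀ (v : V) (a b c : A), tgt a = v → tgt b = v → tgt c = v → a = b ∨ a = c ∨ b = c
  /-- for every arrow `b`, at most one arrow `a` with `ab ∉ ρ` -/
  unblocked_left : ∀ b a a' : A, src a = tgt b → src a' = tgt b →
    [a, b] ∉ ρ → [a', b] ∉ ρ → a = a'
  /-- for every arrow `b`, at most one arrow `c` with `bc ∉ ρ` -/
  unblocked_right : ∀ b c c' : A, src b = tgt c → src b = tgt c' →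
    [b, c] ∉ ρ → [b, c'] ∉ ρ → c = c'

namespace StringAlgData

variable (D : StringAlgData)

/-- Syllables: direct syllables (`Sum.inl`) and inverse syllables (`Sum.inr`). -/
abbrev Syll := D.A ⊕ D.A

/-- The source of a syllable. -/
def sylSrc : D.Syll → D.V
  | .inl a => D.src a
  | .inr a => D.tgt a

/-- The target of a syllable. -/
def sylTgt : D.Syll → D.V
  | .inl a => D.tgt a
  | .inr a => D.src a

/-- The inverse of a syllable. -/
def sylInv : D.Syll → D.Syll
  | .inl a => .inr a
  | .inr a => .inl a

/-- A walk: a nonempty word `α₁⋯αₙ` over the syllables (stored as the list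
`[α₁, …, αₙ]`) with `s(αᵢ) = t(αᵢ₊₁)` for all `i`. -/
def IsWalk (w : List D.Syll) : Prop :=
  w ≠ [] ∧ w.Chain' (fun α β => D.sylSrc α = D.sylTgt β)

/-- A (nonempty) string: a walk none of whose factors, nor inverse of a factor,
lies in `ρ`, and without a syllable immediately followed by its inverse. -/
def IsString (w : List D.Syll) : Prop :=
  D.IsWalk w ∧
  (∀ p ∈ D.ρ, ¬ (p.map (Sum.inl : D.A → D.Syll)) <:+: w ∧
    ¬ ((p.map (Sum.inr : D.A → D.Syll)).reverse) <:+: w) ∧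
  w.Chain' (fun α β => α ≠ D.sylInv β)

/-- The bit associated to a syllable: `0`(=`false`) for direct, `1`(=`true`) for inverse. -/
def sylBit : D.Syll → Bool
  | .inl _ => false
  | .inr _ => true

/-- The sign sequence of a string in `H_l(v)`: `sgn(1) = ε`, `sgn(α𝔶) = sgn(𝔶)·0` for a
direct syllable `α` and `sgn(α𝔶) = sgn(𝔶)·1` for an inverse syllable `α`. -/
def sgn : List D.Syll → List Bool
  | [] => []
  | α :: y => sgn y ++ [D.sylBit α]

/-- The value of the extended `σ`-map on a syllable, given sign maps `sgm`, `tau` on arrows. -/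
def sylSgm (sgm tau : D.A → ℤ) : D.Syll → ℤ
  | .inl a => sgm a
  | .inr a => tau a

/-- Membership in the left hammock `H_l(v)`: the zero-length string `1_{(v,1)}`
(recorded as the empty list) together with all nonempty strings `𝔵` with
`s(𝔵) = v` and `σ(𝔵) = -1`. -/
def InHl (sgm tau : D.A → ℤ) (v : D.V) (w : List D.Syll) : Prop :=
  w = [] ∨ (D.IsString w ∧ ∃ α, w.getLast? = some α ∧ D.sylSrc α = v ∧ D.sylSgm sgm tau α = -1)

/-- The hammock order `<_l`: for `𝔵 = 𝔵'𝔴`, `𝔶 = 𝔶'𝔴` with `𝔴` the longest common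
suffix, `𝔵 <_l 𝔶` iff the rightmost syllable of `𝔵'` is direct or the rightmost
syllable of `𝔶'` is inverse. -/
def ltl (x y : List D.Syll) : Prop :=
  ∃ w x' y', x = x' ++ w ∧ y = y' ++ w ∧
    (∀ α, ¬ (x'.getLast? = some α ∧ y'.getLast? = some α)) ∧
    ((∃ a, x'.getLast? = some (Sum.inl a)) ∨ (∃ a, y'.getLast? = some (Sum.inr a)))

end StringAlgData

namespace HammockAux

open List

variable (D : StringAlgData) (sgm tau : D.A → ℤ) (v : D.V)

/-- The memory bound: maximal length of a relation. -/
def K : ℕ := D.ρ.sup List.length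

lemma two_le_K : 2 ≤ K D := by
  obtain ⟨p, hp⟩ := D.ρ_ne
  exact le_trans (D.ρ_len p hp) (Finset.le_sup hp)

lemma len_le_K {p} (hp : p ∈ D.ρ) : p.length ≤ K D := Finset.le_sup hp

lemma exists_K_succ : ∃ k, K D = k + 1 := ⟨K D - 1, by have := two_le_K D; omega⟩

/-- The local condition on the head of a string. -/
def HeadOK : List D.Syll → D.Syll → Prop
  | [], α => D.sylSrc α = v ∧ D.sylSgm sgm tau α = -1
  | β :: _, α => D.sylSrc α = D.sylTgt β ∧ α ≠ D.sylInv β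

/-- `α` is a legal next syllable on top of the state `s`. -/
def NextOK (s : List D.Syll) (α : D.Syll) : Prop :=
  HeadOK D sgm tau v s α ∧
  ∀ p ∈ D.ρ, ¬ (p.map (Sum.inl : D.A → D.Syll)) <+: (α :: s) ∧
    ¬ ((p.map (Sum.inr : D.A → D.Syll)).reverse) <+: (α :: s)

lemma nextOK_unique
    (hsrc : ∀ a b, a ≠ b → D.src a = D.src b → sgm a = -sgm b)
    (htgt : ∀ a b, a ≠ b → D.tgt a = D.tgt b → tau a = -tau b)
    {s : List D.Syll} {α α' : D.Syll}
    (h : NextOK D sgm tau v s α) (h' : NextOK D sgm tau v s α')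
    (hb : D.sylBit α = D.sylBit α') : α = α' := by
  obtain ⟨h1, h2⟩ := h
  obtain ⟨h1', h2'⟩ := h'
  cases s with
  | nil =>
    cases α with
    | inl a =>
      cases α' with
      | inl a' =>
        obtain ⟨ha, hs⟩ := h1
        obtain ⟨ha', hs'⟩ := h1'
        by_contra hne
        have := hsrc a a' (by simpa using hne)
          (by simpa [StringAlgData.sylSrc] using ha.trans ha'.symm)
        simp only [StringAlgData.sylSgm] at hs hs'
        omega
      | inr a' => simp [StringAlgData.sylBit] at hb
    | inr a =>
      cases α' with
      | inl a' => simp [StringAlgData.sylBit] at hb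
      | inr a' =>
        obtain ⟨ha, hs⟩ := h1
        obtain ⟨ha', hs'⟩ := h1'
        by_contra hne
        have := htgt a a' (by simpa using hne)
          (by simpa [StringAlgData.sylSrc] using ha.trans ha'.symm)
        simp only [StringAlgData.sylSgm] at hs hs'
        omega
  | cons β t =>
    cases β with
    | inl b =>
      cases α with
      | inl a =>
        cases α' with
        | inl a' =>
          refine congrArg Sum.inl (D.unblocked_left b a a' ?_ ?_ ?_ ?_)
          · simpa [StringAlgData.sylSrc, StringAlgData.sylTgt] using h1.1
          · simpa [StringAlgData.sylSrc, StringAlgData.sylTgt] using h1'.1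
          · intro hmem
            exact (h2 [a, b] hmem).1 ⟨t, rfl⟩
          · intro hmem
            exact (h2' [a', b] hmem).1 ⟨t, rfl⟩
        | inr a' => simp [StringAlgData.sylBit] at hb
      | inr c =>
        cases α' with
        | inl a' => simp [StringAlgData.sylBit] at hb
        | inr c' =>
          refine congrArg Sum.inr ?_
          have hc : D.tgt c = D.tgt b := by
            simpa [StringAlgData.sylSrc, StringAlgData.sylTgt] using h1.1
          have hc' : D.tgt c' = D.tgt b := by
            simpa [StringAlgData.sylSrc, StringAlgData.sylTgt] using h1'.1
          have hcb : c ≠ b := by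
            intro hcb; exact h1.2 (by simp [StringAlgData.sylInv, hcb])
          have hcb' : c' ≠ b := by
            intro hcb; exact h1'.2 (by simp [StringAlgData.sylInv, hcb])
          rcases D.two_in (D.tgt b) c c' b hc hc' rfl with h | h | h
          · exact h
          · exact absurd h hcb
          · exact absurd h hcb'
    | inr b =>
      cases α with
      | inl a =>
        cases α' with
        | inl a' =>
          refine congrArg Sum.inl ?_
          have hc : D.src a = D.src b := by
            simpa [StringAlgData.sylSrc, StringAlgData.sylTgt] using h1.1
          have hc' : D.src a' = D.src b := by
            simpa [StringAlgData.sylSrc, StringAlgData.sylTgt] using h1'.1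
          have hcb : a ≠ b := by
            intro hcb; exact h1.2 (by simp [StringAlgData.sylInv, hcb])
          have hcb' : a' ≠ b := by
            intro hcb; exact h1'.2 (by simp [StringAlgData.sylInv, hcb])
          rcases D.two_out (D.src b) a a' b hc hc' rfl with h | h | h
          · exact h
          · exact absurd h hcb
          · exact absurd h hcb'
        | inr a' => simp [StringAlgData.sylBit] at hb
      | inr c =>
        cases α' with
        | inl a' => simp [StringAlgData.sylBit] at hb
        | inr c' =>
          refine congrArg Sum.inr (D.unblocked_right b c c' ?_ ?_ ?_ ?_)
          · simpa [StringAlgData.sylSrc, StringAlgData.sylTgt] using h1.1.symm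
          · simpa [StringAlgData.sylSrc, StringAlgData.sylTgt] using h1'.1.symm
          · intro hmem
            exact (h2 [b, c] hmem).2 ⟨t, by simp⟩
          · intro hmem
            exact (h2' [b, c'] hmem).2 ⟨t, by simp⟩

/-- Bottom-up (right-to-left) construction predicate for strings in the hammock. -/
def Build : List D.Syll → Prop
  | [] => True
  | α :: t => NextOK D sgm tau v (t.take (K D)) α ∧ Build t

lemma build_nil : Build D sgm tau v [] := trivial

lemma build_append {u t : List D.Syll} (h : Build D sgm tau v (u ++ t)) :
    Build D sgm tau v t := by
  induction u with
  | nil => exact h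
  | cons a u ih => exact ih h.2

lemma take_cons_take {γ : Type*} {n : ℕ} (hn : 1 ≤ n) (α : γ) (t : List γ) :
    (α :: t.take n).take n = (α :: t).take n := by
  obtain ⟨k, rfl⟩ : ∃ k, n = k + 1 := ⟨n - 1, by omega⟩
  rw [List.take_succ_cons, List.take_succ_cons, List.take_take,
    Nat.min_eq_left (Nat.le_succ k)]

lemma build_cons_not_prefix {α : D.Syll} {t : List D.Syll}
    (hb : Build D sgm tau v (α :: t)) {p} (hp : p ∈ D.ρ) :
    ¬ (p.map (Sum.inl : D.A → D.Syll)) <+: (α :: t) ∧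
    ¬ ((p.map (Sum.inr : D.A → D.Syll)).reverse) <+: (α :: t) := by
  have h := hb.1.2 p hp
  have hK : p.length ≤ K D := len_le_K D hp
  obtain ⟨k, hk⟩ := exists_K_succ D
  constructor
  · intro hpre
    refine h.1 ?_
    have : (p.map (Sum.inl : D.A → D.Syll)) <+: (α :: t).take (K D + 1) :=
      List.prefix_take_iff.mpr ⟨hpre, by simpa using hK.trans (Nat.le_succ _)⟩
    rwa [List.take_succ_cons] at this
  · intro hpre
    refine h.2 ?_
    have : ((p.map (Sum.inr : D.A → D.Syll)).reverse) <+: (α :: t).take (K D + 1) :=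
      List.prefix_take_iff.mpr ⟨hpre, by simpa using hK.trans (Nat.le_succ _)⟩
    rwa [List.take_succ_cons] at this

lemma build_getLast {w : List D.Syll} (hw : Build D sgm tau v w) (hne : w ≠ []) :
    ∃ α, w.getLast? = some α ∧ D.sylSrc α = v ∧ D.sylSgm sgm tau α = -1 := by
  induction w with
  | nil => exact absurd rfl hne
  | cons a t ih =>
    cases t with
    | nil =>
      have h := hw.1.1
      rw [List.take_nil] at h
      exact ⟨a, rfl, h.1, h.2⟩
    | cons b t0 =>
      obtain ⟨α, h1, h2⟩ := ih hw.2 (by simp)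
      exact ⟨α, by rwa [List.getLast?_cons_cons], h2⟩

lemma build_chain {w : List D.Syll} (hw : Build D sgm tau v w) :
    w.Chain' (fun α β => D.sylSrc α = D.sylTgt β ∧ α ≠ D.sylInv β) := by
  induction w with
  | nil => exact List.isChain_nil
  | cons a t ih =>
    cases t with
    | nil => exact List.isChain_singleton _
    | cons b t0 =>
      refine List.isChain_cons_cons.mpr ⟨?_, ih hw.2⟩
      obtain ⟨k, hk⟩ := exists_K_succ D
      have h := hw.1.1
      rw [hk, List.take_succ_cons] at h
      exact h

lemma build_inHl {w : List D.Syll} (hw : Build D sgm tau v w) :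
    D.InHl sgm tau v w := by
  rcases eq_or_ne w [] with rfl | hne
  · exact Or.inl rfl
  refine Or.inr ⟨⟨⟨hne, (build_chain D sgm tau v hw).imp fun a b h => h.1⟩, ?_,
    (build_chain D sgm tau v hw).imp fun a b h => h.2⟩, build_getLast D sgm tau v hw hne⟩
  intro p hp
  have hlen2 : 2 ≤ p.length := D.ρ_len p hp
  constructor
  · intro hinf
    obtain ⟨t, hpre, hsuf⟩ := List.infix_iff_prefix_suffix.mp hinf
    obtain ⟨u, rfl⟩ := hsuf
    have hbt : Build D sgm tau v t := build_append D sgm tau v hw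
    cases t with
    | nil =>
      have h0 : p.length ≤ 0 := by simpa using hpre.length_le
      omega
    | cons α t0 => exact (build_cons_not_prefix D sgm tau v hbt hp).1 hpre
  · intro hinf
    obtain ⟨t, hpre, hsuf⟩ := List.infix_iff_prefix_suffix.mp hinf
    obtain ⟨u, rfl⟩ := hsuf
    have hbt : Build D sgm tau v t := build_append D sgm tau v hw
    cases t with
    | nil =>
      have h0 : p.length ≤ 0 := by simpa using hpre.length_le
      omega
    | cons α t0 => exact (build_cons_not_prefix D sgm tau v hbt hp).2 hpre

lemma inHl_build {w : List D.Syll} (hw : D.InHl sgm tau v w) :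
    Build D sgm tau v w := by
  induction w with
  | nil => trivial
  | cons α t ih =>
    rcases hw with h | ⟨hs, β, hlast, hsrcβ, hsgmβ⟩
    · exact absurd h (by simp)
    obtain ⟨k, hk⟩ := exists_K_succ D
    cases t with
    | nil =>
      obtain rfl : α = β := by simpa using hlast
      refine ⟨⟨?_, ?_⟩, trivial⟩
      · rw [List.take_nil]
        exact ⟨hsrcβ, hsgmβ⟩
      · intro p hp
        have hlen2 : 2 ≤ p.length := D.ρ_len p hp
        constructor
        · intro hpre
          have h0 : p.length ≤ 1 := by simpa using hpre.length_le
          omega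
        · intro hpre
          have h0 : p.length ≤ 1 := by simpa using hpre.length_le
          omega
    | cons γ t0 =>
      have hchain1 := hs.1.2
      have hchain2 := hs.2.2
      refine ⟨⟨?_, ?_⟩, ih ?_⟩
      · rw [hk, List.take_succ_cons]
        exact ⟨(List.isChain_cons_cons.mp hchain1).1, (List.isChain_cons_cons.mp hchain2).1⟩
      · intro p hp
        constructor
        · intro hpre
          rw [← List.take_succ_cons] at hpre
          exact (hs.2.1 p hp).1 (List.prefix_take_iff.mp hpre).1.isInfix
        · intro hpre
          rw [← List.take_succ_cons] at hpre
          exact (hs.2.1 p hp).2 (List.prefix_take_iff.mp hpre).1.isInfix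
      · refine Or.inr ⟨⟨⟨by simp, hchain1.suffix (List.suffix_cons α _)⟩, ?_,
          hchain2.suffix (List.suffix_cons α _)⟩, β, ?_, hsrcβ, hsgmβ⟩
        · intro p hp
          exact ⟨fun h => (hs.2.1 p hp).1 (h.trans (List.suffix_cons α _).isInfix),
            fun h => (hs.2.1 p hp).2 (h.trans (List.suffix_cons α _).isInfix)⟩
        · rwa [List.getLast?_cons_cons] at hlast

lemma sgn_eq (w : List D.Syll) : D.sgn w = w.reverse.map D.sylBit := by
  induction w with
  | nil => rfl
  | cons a t ih => simp [StringAlgData.sgn, ih]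

lemma sgn_inj
    (hsrc : ∀ a b, a ≠ b → D.src a = D.src b → sgm a = -sgm b)
    (htgt : ∀ a b, a ≠ b → D.tgt a = D.tgt b → tau a = -tau b) :
    ∀ {w w' : List D.Syll}, Build D sgm tau v w → Build D sgm tau v w' →
      D.sgn w = D.sgn w' → w = w' := by
  intro w
  induction w with
  | nil =>
    intro w' _ _ h
    cases w' with
    | nil => rfl
    | cons a t =>
      exfalso
      have : (D.sgn (a :: t)).length = 0 := by rw [← h]; rfl
      rw [sgn_eq] at this
      simp at this
  | cons α t ih =>
    intro w' hw hw' h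
    cases w' with
    | nil =>
      exfalso
      have : (D.sgn (α :: t)).length = 0 := by rw [h]; rfl
      rw [sgn_eq] at this
      simp at this
    | cons α' t' =>
      have h2 : D.sgn t ++ [D.sylBit α] = D.sgn t' ++ [D.sylBit α'] := h
      obtain ⟨h3, h4⟩ := List.append_inj' h2 rfl
      obtain rfl : t = t' := ih hw.2 hw'.2 h3
      have hbit : D.sylBit α = D.sylBit α' := by simpa using h4
      obtain rfl : α = α' := nextOK_unique D sgm tau v hsrc htgt hw.1 hw'.1 hbit
      rfl

open Classical in
/-- The automaton: states are short prefixes of strings being built right-to-left. -/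
noncomputable def Mach : PDFA Bool where
  State := { l : List D.Syll // l.length ≤ K D }
  finState := by
    haveI := D.finA
    exact (List.finite_length_le D.Syll (K D)).to_subtype
  start := ⟨[], by simp⟩
  accept := Set.univ
  step := fun s b =>
    if h : ∃ α, D.sylBit α = b ∧ NextOK D sgm tau v s.1 α then
      some ⟨(h.choose :: s.1).take (K D), by
        rw [List.length_take]; exact min_le_left _ _⟩
    else none

open Classical in
lemma mach_step (s : (Mach D sgm tau v).State) (b : Bool) :
    (Mach D sgm tau v).step s b =
      if h : ∃ α, D.sylBit α = b ∧ NextOK D sgm tau v s.1 α then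
        some ⟨(h.choose :: s.1).take (K D), by
          rw [List.length_take]; exact min_le_left _ _⟩
      else none := rfl

lemma run_append (N : PDFA Bool) (q : N.State) (x y : List Bool) :
    N.run q (x ++ y) = (N.run q x) >>= fun q' => N.run q' y := by
  simp [PDFA.run]

lemma run_single (N : PDFA Bool) (q : N.State) (b : Bool) :
    N.run q [b] = N.step q b := by
  simp [PDFA.run]

lemma run_sgn
    (hsrc : ∀ a b, a ≠ b → D.src a = D.src b → sgm a = -sgm b)
    (htgt : ∀ a b, a ≠ b → D.tgt a = D.tgt b → tau a = -tau b)
    {w : List D.Syll} (hw : Build D sgm tau v w) :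
    (Mach D sgm tau v).run (Mach D sgm tau v).start (D.sgn w) =
      some ⟨w.take (K D), by rw [List.length_take]; exact min_le_left _ _⟩ := by
  induction w with
  | nil =>
    exact congrArg some (Subtype.ext (List.take_nil).symm)
  | cons α t ih =>
    have hstep : D.sgn (α :: t) = D.sgn t ++ [D.sylBit α] := rfl
    rw [hstep, run_append, ih hw.2]
    show (Mach D sgm tau v).run _ [D.sylBit α] = _
    refine (run_single (Mach D sgm tau v) _ _).trans ?_
    refine (mach_step D sgm tau v _ _).trans ?_
    have hex : ∃ β, D.sylBit β = D.sylBit α ∧ NextOK D sgm tau v (t.take (K D)) β :=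
      ⟨α, rfl, hw.1⟩
    rw [dif_pos hex]
    have hch := hex.choose_spec
    have he : hex.choose = α :=
      nextOK_unique D sgm tau v hsrc htgt hch.2 hw.1 hch.1
    simp only [he]
    exact congrArg some (Subtype.ext
      (take_cons_take (by have := two_le_K D; omega) α t))

lemma run_decode {x : List Bool} {s : (Mach D sgm tau v).State}
    (h : (Mach D sgm tau v).run (Mach D sgm tau v).start x = some s) :
    ∃ w, Build D sgm tau v w ∧ D.sgn w = x ∧ s.1 = w.take (K D) := by
  induction x using List.reverseRecOn generalizing s with
  | nil =>
    refine ⟨[], trivial, rfl, ?_⟩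
    have h2 : some (Mach D sgm tau v).start = some s := h
    obtain rfl : (Mach D sgm tau v).start = s := by injection h2
    exact (List.take_nil).symm
  | append_singleton y b ih =>
    rw [run_append] at h
    cases hy : (Mach D sgm tau v).run (Mach D sgm tau v).start y with
    | none => rw [hy] at h; exact absurd h (by simp)
    | some s' =>
      rw [hy] at h
      have h' : (Mach D sgm tau v).step s' b = some s := by
        rw [← run_single]
        simpa using h
      obtain ⟨w', hw', hsgn', hs'⟩ := ih hy
      rw [mach_step] at h'
      by_cases hex : ∃ α, D.sylBit α = b ∧ NextOK D sgm tau v s'.1 α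
      · rw [dif_pos hex] at h'
        obtain ⟨χ, hb2, hn2, h''⟩ : ∃ χ, D.sylBit χ = b ∧ NextOK D sgm tau v s'.1 χ ∧
            (⟨(χ :: s'.1).take (K D), by rw [List.length_take]; exact min_le_left _ _⟩ :
              (Mach D sgm tau v).State) = s :=
          ⟨hex.choose, hex.choose_spec.1, hex.choose_spec.2, by injection h'⟩
        refine ⟨χ :: w', ⟨?_, hw'⟩, ?_, ?_⟩
        · rw [← hs']; exact hn2
        · show D.sgn w' ++ [D.sylBit χ] = y ++ [b]
          rw [hsgn', hb2]
        · rw [← h'']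
          show (χ :: s'.1).take (K D) = (χ :: w').take (K D)
          rw [hs']
          exact take_cons_take (by have := two_le_K D; omega) χ w'
      · rw [dif_neg hex] at h'
        exact absurd h' (by simp)

lemma mem_lang_iff {x : List Bool} :
    x ∈ (Mach D sgm tau v).lang ↔
      ∃ s, (Mach D sgm tau v).run (Mach D sgm tau v).start x = some s := by
  constructor
  · rintro ⟨q, -, hq⟩; exact ⟨q, hq⟩
  · rintro ⟨q, hq⟩; exact ⟨q, Set.mem_univ q, hq⟩

/-! ### Order lemmas for `inlt`. -/

lemma inlt_append_true (u r : List Bool) : inlt u (u ++ true :: r) := by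
  induction u with
  | nil => simp [inlt]
  | cons a u ih => exact Or.inr ⟨rfl, ih⟩

lemma inlt_false_append (u r : List Bool) : inlt (u ++ false :: r) u := by
  induction u with
  | nil => simp [inlt]
  | cons a u ih => exact Or.inr ⟨rfl, ih⟩

lemma inlt_false_true (u r r' : List Bool) :
    inlt (u ++ false :: r) (u ++ true :: r') := by
  induction u with
  | nil => exact Or.inl ⟨rfl, rfl⟩
  | cons a u ih => exact Or.inr ⟨rfl, ih⟩

lemma inlt_irrefl : ∀ x : List Bool, ¬ inlt x x := by
  intro x
  induction x with
  | nil => simp [inlt]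
  | cons a u ih =>
    intro h
    rcases h with ⟨h1, h2⟩ | ⟨-, h⟩
    · rw [h1] at h2; cases h2
    · exact ih h

lemma inlt_asymm : ∀ {x y : List Bool}, inlt x y → inlt y x → False := by
  intro x
  induction x with
  | nil =>
    intro y h1 h2
    cases y with
    | nil => exact h1
    | cons b y' =>
      have hb : b = true := h1
      have hb' : b = false := h2
      rw [hb] at hb'; cases hb'
  | cons a x' ih =>
    intro y h1 h2
    cases y with
    | nil =>
      have hb : a = false := h1
      have hb' : a = true := h2
      rw [hb'] at hb; cases hb
    | cons b y' =>
      rcases h1 with ⟨ha, hb⟩ | ⟨hab, h1'⟩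
      · rcases h2 with ⟨hb', ha'⟩ | ⟨hba, h2'⟩
        · rw [ha] at ha'; cases ha'
        · rw [hba, ha] at hb; cases hb
      · rcases h2 with ⟨hb', ha'⟩ | ⟨hba, h2'⟩
        · rw [hab, hb'] at ha'; cases ha'
        · exact ih h1' h2'

/-- Existence of the longest-common-suffix decomposition. -/
lemma exists_lcs {γ : Type*} :
    ∀ {x y : List γ}, x ≠ y →
      ∃ w x' y', x = x' ++ w ∧ y = y' ++ w ∧
        ∀ α, ¬ (x'.getLast? = some α ∧ y'.getLast? = some α) := by
  intro x
  induction x using List.reverseRecOn with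
  | nil =>
    intro y hne
    exact ⟨[], [], y, by simp, by simp, fun α ⟨h, _⟩ => by simp at h⟩
  | append_singleton x₀ a ih =>
    intro y hne
    by_cases hy : y.getLast? = some a
    · have hy' : y.dropLast ++ [a] = y := List.dropLast_append_getLast? a hy
      have hne' : x₀ ≠ y.dropLast := by
        intro h; apply hne; rw [h, hy']
      obtain ⟨w, x', y', h1, h2, h3⟩ := ih hne'
      exact ⟨w ++ [a], x', y', by rw [← List.append_assoc, ← h1],
        by rw [← List.append_assoc, ← h2, hy'], h3⟩
    · refine ⟨[], x₀ ++ [a], y, by simp, by simp, ?_⟩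
      rintro α ⟨h1, h2⟩
      rw [List.getLast?_concat] at h1
      obtain rfl : a = α := by injection h1
      exact hy h2

lemma ltl_total {x y : List D.Syll} (hne : x ≠ y) : D.ltl x y ∨ D.ltl y x := by
  obtain ⟨w, x', y', hx, hy, h3⟩ := exists_lcs hne
  cases hx' : x'.getLast? with
  | some α =>
    cases α with
    | inl a => exact Or.inl ⟨w, x', y', hx, hy, h3, Or.inl ⟨a, hx'⟩⟩
    | inr a =>
      exact Or.inr ⟨w, y', x', hy, hx, fun β hβ => h3 β ⟨hβ.2, hβ.1⟩, Or.inr ⟨a, hx'⟩⟩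
  | none =>
    obtain rfl : x' = [] := by simpa using hx'
    cases hy' : y'.getLast? with
    | none =>
      obtain rfl : y' = [] := by simpa using hy'
      exact absurd (hx.trans hy.symm) hne
    | some β =>
      cases β with
      | inl b =>
        exact Or.inr ⟨w, y', [], hy, hx, fun γ hγ => by simp at hγ, Or.inl ⟨b, hy'⟩⟩
      | inr b => exact Or.inl ⟨w, [], y', hx, hy, h3, Or.inr ⟨b, hy'⟩⟩

lemma reverse_eq_cons_of_getLast? {γ : Type*} {l : List γ} {α : γ}
    (h : l.getLast? = some α) : ∃ t, l.reverse = α :: t := by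
  cases hr : l.reverse with
  | nil => rw [List.getLast?_eq_head?_reverse, hr] at h; cases h
  | cons c t =>
    rw [List.getLast?_eq_head?_reverse, hr] at h
    obtain rfl : c = α := by injection h
    exact ⟨t, rfl⟩

lemma build_of_decomp {x' w : List D.Syll} {α : D.Syll}
    (hb : Build D sgm tau v (x' ++ w)) (hα : x'.getLast? = some α) :
    NextOK D sgm tau v (w.take (K D)) α := by
  have hx' : x'.dropLast ++ [α] = x' := List.dropLast_append_getLast? α hα
  have : x' ++ w = x'.dropLast ++ (α :: w) := by
    conv_lhs => rw [← hx']
    simp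
  rw [this] at hb
  exact (build_append D sgm tau v hb).1

lemma ltl_inlt
    (hsrc : ∀ a b, a ≠ b → D.src a = D.src b → sgm a = -sgm b)
    (htgt : ∀ a b, a ≠ b → D.tgt a = D.tgt b → tau a = -tau b)
    {x y : List D.Syll} (hx : Build D sgm tau v x) (hy : Build D sgm tau v y)
    (hl : D.ltl x y) : inlt (D.sgn x) (D.sgn y) := by
  obtain ⟨w, x', y', rfl, rfl, hne, hdisj⟩ := hl
  rw [sgn_eq, sgn_eq, List.reverse_append, List.reverse_append,
    List.map_append, List.map_append]
  cases hx' : x'.getLast? with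
  | none =>
    obtain rfl : x' = [] := by simpa using hx'
    rcases hdisj with ⟨a, ha⟩ | ⟨a, ha⟩
    · rw [hx'] at ha; cases ha
    · obtain ⟨t, ht⟩ := reverse_eq_cons_of_getLast? ha
      rw [ht]
      simpa [StringAlgData.sylBit] using inlt_append_true (w.reverse.map D.sylBit) (t.map D.sylBit)
  | some α =>
    cases hy' : y'.getLast? with
    | none =>
      obtain rfl : y' = [] := by simpa using hy'
      rcases hdisj with ⟨a, ha⟩ | ⟨a, ha⟩
      · obtain rfl : α = Sum.inl a := by rw [hx'] at ha; injection ha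
        obtain ⟨t, ht⟩ := reverse_eq_cons_of_getLast? hx'
        rw [ht]
        simpa [StringAlgData.sylBit] using
          inlt_false_append (w.reverse.map D.sylBit) (t.map D.sylBit)
      · rw [hy'] at ha; cases ha
    | some β =>
      have hαβ : α ≠ β := by
        rintro rfl; exact hne α ⟨hx', hy'⟩
      have n1 : NextOK D sgm tau v (w.take (K D)) α := build_of_decomp D sgm tau v hx hx'
      have n2 : NextOK D sgm tau v (w.take (K D)) β := build_of_decomp D sgm tau v hy hy'
      have hbitne : D.sylBit α ≠ D.sylBit β := fun hb =>
        hαβ (nextOK_unique D sgm tau v hsrc htgt n1 n2 hb)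
      have hbits : D.sylBit α = false ∧ D.sylBit β = true := by
        rcases hdisj with ⟨a, ha⟩ | ⟨a, ha⟩
        · obtain rfl : α = Sum.inl a := by rw [hx'] at ha; injection ha
          have : D.sylBit β = true := by
            cases hb : D.sylBit β
            · exact absurd hb (by simpa [StringAlgData.sylBit] using hbitne)
            · rfl
          exact ⟨rfl, this⟩
        · obtain rfl : β = Sum.inr a := by rw [hy'] at ha; injection ha
          have : D.sylBit α = false := by
            cases hb : D.sylBit α
            · rfl
            · exact absurd hb (by simpa [StringAlgData.sylBit] using hbitne)
          exact ⟨this, rfl⟩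
      obtain ⟨t1, ht1⟩ := reverse_eq_cons_of_getLast? hx'
      obtain ⟨t2, ht2⟩ := reverse_eq_cons_of_getLast? hy'
      rw [ht1, ht2]
      simp only [List.map_cons, hbits.1, hbits.2]
      exact inlt_false_true _ _ _

lemma ltl_iff_inlt
    (hsrc : ∀ a b, a ≠ b → D.src a = D.src b → sgm a = -sgm b)
    (htgt : ∀ a b, a ≠ b → D.tgt a = D.tgt b → tau a = -tau b)
    {x y : List D.Syll} (hx : Build D sgm tau v x) (hy : Build D sgm tau v y) :
    D.ltl x y ↔ inlt (D.sgn x) (D.sgn y) := by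
  constructor
  · exact ltl_inlt D sgm tau v hsrc htgt hx hy
  · intro h
    rcases eq_or_ne x y with rfl | hne
    · exact absurd h (inlt_irrefl _)
    rcases ltl_total D hne with h' | h'
    · exact h'
    · exact absurd (ltl_inlt D sgm tau v hsrc htgt hy hx h')
        (fun h2 => inlt_asymm h h2)

end HammockAux

/-- For a string algebra datum with sign maps and a vertex `v`, the
left hammock linear order `(H_l(v), <_l)` is order-isomorphic to the linguage `𝐋(M)`
of some DFA `M` over `{0,1}`. -/
theorem hammock_isLinguage (D : StringAlgData) (sgm tau : D.A → ℤ)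
    (hsgm : ∀ a, sgm a = 1 ∨ sgm a = -1) (htau : ∀ a, tau a = 1 ∨ tau a = -1)
    (hsrc : ∀ a b, a ≠ b → D.src a = D.src b → sgm a = -sgm b)
    (htgt : ∀ a b, a ≠ b → D.tgt a = D.tgt b → tau a = -tau b)
    (hcomp : ∀ a b, D.src a = D.tgt b → [a, b] ∉ D.ρ → sgm a = -tau b)
    (v : D.V) :
    ∃ M : PDFA Bool,
      Nonempty ((fun x y : {w : List D.Syll // D.InHl sgm tau v w} => D.ltl x.1 y.1) ≃r
        fun x y : M.lang => inlt x.1 y.1) := by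
  classical
  refine ⟨HammockAux.Mach D sgm tau v, ⟨?_⟩⟩
  have hB : ∀ w, D.InHl sgm tau v w ↔ HammockAux.Build D sgm tau v w := fun w =>
    ⟨HammockAux.inHl_build D sgm tau v, HammockAux.build_inHl D sgm tau v⟩
  have hmem : ∀ w : {w : List D.Syll // D.InHl sgm tau v w},
      D.sgn w.1 ∈ (HammockAux.Mach D sgm tau v).lang := fun w =>
    (HammockAux.mem_lang_iff D sgm tau v).mpr
      ⟨_, HammockAux.run_sgn D sgm tau v hsrc htgt ((hB w.1).mp w.2)⟩
  let f : {w : List D.Syll // D.InHl sgm tau v w} → (HammockAux.Mach D sgm tau v).lang :=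
    fun w => ⟨D.sgn w.1, hmem w⟩
  have hinj : Function.Injective f := by
    intro a b hab
    exact Subtype.ext (HammockAux.sgn_inj D sgm tau v hsrc htgt
      ((hB a.1).mp a.2) ((hB b.1).mp b.2) (congrArg Subtype.val hab))
  have hsurj : Function.Surjective f := by
    rintro ⟨x, hx⟩
    obtain ⟨s, hs⟩ := (HammockAux.mem_lang_iff D sgm tau v).mp hx
    obtain ⟨w, hw, hsgn, -⟩ := HammockAux.run_decode D sgm tau v hs
    exact ⟨⟨w, (hB w).mpr hw⟩, Subtype.ext hsgn⟩
  exact ⟨Equiv.ofBijective f ⟨hinj, hsurj⟩, fun {a b} =>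
    (HammockAux.ltl_iff_inlt D sgm tau v hsrc htgt
      ((hB a.1).mp a.2) ((hB b.1).mp b.2)).symm⟩
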